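/- For every ε > 0 and every natural number N ≥ 1, the Euclidean volume of the set V_N = {(x₁,…,x_N) ∈ ℝᴺ : |x₁ + ⋯ + x_k| ≤ ε for all 1 ≤ k ≤ N, and |x_i| ≤ ε for all i} is at least εᴺ. -/

import Mathlib

open MeasureTheory

theorem volume_VN_ge (ε : ℝ) (hε : 0 < ε) (N : ℕ) (hN : 1 ≤ N) :
    ENNReal.ofReal (ε ^ N) ≤
      volume {x : Fin N → ℝ |
        (∀ i, |x i| ≤ ε) ∧
        ∀ k : Fin N, |∑ i ∈ Finset.univ.filter (· ≤ k), x i| ≤ ε} := by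
  set M : Matrix (Fin N) (Fin N) ℝ := fun k i => if i ≤ k then 1 else 0 with hM
  have hdet : M.det = 1 := by
    rw [Matrix.det_of_lowerTriangular M]
    · simp [hM]
    · intro i j h
      simp only [hM]
      rw [if_neg]
      exact fun hle => absurd hle (not_le.2 h)
  set f : (Fin N → ℝ) →ₗ[ℝ] (Fin N → ℝ) := Matrix.toLin' M with hf
  have hfdet : LinearMap.det f = 1 := by
    rw [hf, LinearMap.det_toLin']; exact hdet
  have hfx : ∀ (x : Fin N → ℝ) (k : Fin N),
      f x k = ∑ i ∈ Finset.univ.filter (· ≤ k), x i := by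
    intro x k
    rw [hf, Matrix.toLin'_apply]
    simp [hf, hM, Matrix.toLin'_apply, Matrix.mulVec, dotProduct, ite_mul, one_mul, zero_mul,
      Finset.sum_ite_mem, Finset.sum_filter, ite_mul]
  set S : Set (Fin N → ℝ) := Set.pi Set.univ (fun _ => Set.Icc (0:ℝ) ε) with hS
  have hsub : f ⁻¹' S ⊆ {x : Fin N → ℝ |
        (∀ i, |x i| ≤ ε) ∧
        ∀ k : Fin N, |∑ i ∈ Finset.univ.filter (· ≤ k), x i| ≤ ε} := by
    intro x hx
    have hs : ∀ k : Fin N, (∑ i ∈ Finset.univ.filter (· ≤ k), x i) ∈ Set.Icc (0:ℝ) ε := by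
      intro k
      have := hx k (Set.mem_univ k)
      rwa [hfx x k] at this
    constructor
    · intro i
      have hsplit : ∑ j ∈ Finset.univ.filter (· ≤ i), x j
          = x i + ∑ j ∈ Finset.univ.filter (· < i), x j := by
        have : Finset.univ.filter (· ≤ i) = insert i (Finset.univ.filter (· < i)) := by
          ext a
          simp [Finset.mem_insert, le_iff_lt_or_eq, or_comm, eq_comm]
        rw [this, Finset.sum_insert (by simp)]
      by_cases h0 : (i : ℕ) = 0
      · have : Finset.univ.filter (· < i) = (∅ : Finset (Fin N)) := by
          ext a; simp [Fin.lt_def, h0]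
        rw [this, Finset.sum_empty, add_zero] at hsplit
        have := hs i
        rw [hsplit] at this
        rw [abs_le]
        constructor <;> [linarith [this.1]; exact this.2]
      · have hipos : 0 < (i : ℕ) := Nat.pos_of_ne_zero h0
        set j : Fin N := ⟨(i : ℕ) - 1, lt_of_le_of_lt (Nat.sub_le _ _) i.2⟩ with hj
        have : Finset.univ.filter (· < i) = Finset.univ.filter (· ≤ j) := by
          ext a
          simp only [Finset.mem_filter, Finset.mem_univ, true_and, Fin.lt_def, Fin.le_def, hj]
          omega
        rw [this] at hsplit
        have h1 := hs i
        have h2 := hs j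
        rw [hsplit] at h1
        rw [abs_le]
        constructor <;> [linarith [h1.1, h2.2]; linarith [h1.2, h2.1]]
    · intro k
      have := hs k
      rw [abs_le]
      constructor <;> [linarith [this.1]; exact this.2]
  calc ENNReal.ofReal (ε ^ N) = volume S := by
        rw [hS, volume_pi_pi]
        simp [Real.volume_Icc, ← ENNReal.ofReal_pow hε.le]
    _ = volume (f ⁻¹' S) := by
        rw [Measure.addHaar_preimage_linearMap volume (by rw [hfdet]; norm_num) S, hfdet]
        simp
    _ ≤ _ := measure_mono hsub
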